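/- Let {u_k}_{k=0}^{N−1} be an input sequence, x_0 ∈ ℝ^n an initial state, and {x_k} the resulting state sequence. For n ≤ k ≤ N−L, define Φ_k ∈ ℝ^{(n+m)×(n+1)} as the matrix with columns (x_{k−n}; u_{k−n}), …, (x_k; u_k), and U_k ∈ ℝ^{m(L−1)×(n+1)} as the matrix with (i,j)-block u_{k−n+1+i+j} for i = 0,…,L−2 and j = 0,…,n. Then the stacked matrix [Φ_k; U_k] satisfies [Φ_k; U_k] d = Z̃ u_{[k−n,k+L−1]}. -/
import Mathlib


open Matrix Finset

noncomputable def stateSeq {n m : ℕ} (A : Matrix (Fin n) (Fin n) ℝ) (B : Matrix (Fin n) (Fin m) ℝ)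
    (x0 : Fin n → ℝ) (u : ℕ → Fin m → ℝ) : ℕ → Fin n → ℝ
  | 0 => x0
  | k + 1 => A.mulVec (stateSeq A B x0 u k) + B.mulVec (u k)

/-- Markov parameters `Γ̃_j` of the extended system with output `φ_k = (x_k; u_k)`:
`Γ̃_0 = D̃ = [0; I_m]` and `Γ̃_j = C̃ A^(j-1) B = [A^(j-1) B; 0]` for `j ≥ 1`. -/
noncomputable def MarkovT {n m : ℕ} (A : Matrix (Fin n) (Fin n) ℝ) (B : Matrix (Fin n) (Fin m) ℝ) :
    ℕ → Matrix (Fin n ⊕ Fin m) (Fin m) ℝ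
  | 0 => Matrix.of (Sum.elim (fun _ _ => (0 : ℝ)) (fun i l => if i = l then 1 else 0))
  | j + 1 => Matrix.of (Sum.elim (fun i l => (A ^ j * B) i l) (fun _ _ => 0))

/-- `M̃ = [M̃_n ⋯ M̃_1 M̃_0]` with `M̃_j = ∑_{q=0}^j d_{j-q} Γ̃_q`. -/
noncomputable def Mtil {n m : ℕ} (A : Matrix (Fin n) (Fin n) ℝ) (B : Matrix (Fin n) (Fin m) ℝ)
    (d : ℕ → ℝ) : Matrix (Fin n ⊕ Fin m) (Fin (n + 1) × Fin m) ℝ :=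
  Matrix.of fun i jl =>
    (∑ q ∈ Finset.range ((n - (jl.1 : ℕ)) + 1),
      d ((n - (jl.1 : ℕ)) - q) • MarkovT A B q) i jl.2

/-- The Toeplitz matrix `T ∈ ℝ^{(L-1)×(L+n-1)}` with `T_{i,j} = d_{n-(j-i)}` for
`0 ≤ j - i ≤ n` and zero otherwise. -/
noncomputable def Tmat (d : ℕ → ℝ) (n L : ℕ) : Matrix (Fin (L - 1)) (Fin (L + n - 1)) ℝ :=
  Matrix.of fun i j =>
    if (i : ℕ) ≤ (j : ℕ) ∧ (j : ℕ) ≤ (i : ℕ) + n then d (n - ((j : ℕ) - (i : ℕ))) else 0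

/-- The block matrix `Z̃ = [[M̃, 0], [0, T ⊗ I_m]]`, with `M̃` occupying the first `m(n+1)`
columns and `T ⊗ I_m` occupying the last `m(L+n-1)` columns. -/
noncomputable def Ztil {n m : ℕ} (A : Matrix (Fin n) (Fin n) ℝ) (B : Matrix (Fin n) (Fin m) ℝ)
    (d : ℕ → ℝ) (L : ℕ) :
    Matrix ((Fin n ⊕ Fin m) ⊕ (Fin (L - 1) × Fin m)) (Fin (L + n) × Fin m) ℝ :=
  Matrix.of fun i jl =>
    match i with
    | Sum.inl i' =>
        if h : (jl.1 : ℕ) ≤ n then Mtil A B d i' (⟨(jl.1 : ℕ), by omega⟩, jl.2) else 0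
    | Sum.inr il' =>
        if h : 1 ≤ (jl.1 : ℕ) then
          Tmat d n L il'.1 ⟨(jl.1 : ℕ) - 1, by have := jl.1.isLt; omega⟩ *
            (if il'.2 = jl.2 then 1 else 0)
        else 0

/-- Reindexing of `(x_k; u_{[k,k+L-1]})`-coordinates as the coordinates of the extended-output
window `(φ_k; u_{[k+1,k+L-1]})` used in `Z̃`. -/
def embed (n m L : ℕ) : Fin n ⊕ (Fin L × Fin m) → (Fin n ⊕ Fin m) ⊕ (Fin (L - 1) × Fin m) :=
  fun i =>
    match i with
    | Sum.inl i' => Sum.inl (Sum.inl i')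
    | Sum.inr il =>
        if h : (il.1 : ℕ) = 0 then Sum.inl (Sum.inr il.2)
        else Sum.inr (⟨(il.1 : ℕ) - 1, by have := il.1.isLt; omega⟩, il.2)

/-- The matrix `[H_1(x_{[0,N-L]}); H_L(u)]` whose `k`-th column is `(x_k; u_{[k,k+L-1]})`. -/
noncomputable def Hxu {n m : ℕ} (A : Matrix (Fin n) (Fin n) ℝ) (B : Matrix (Fin n) (Fin m) ℝ)
    (x0 : Fin n → ℝ) (u : ℕ → Fin m → ℝ) (L N : ℕ) :
    Matrix (Fin n ⊕ (Fin L × Fin m)) (Fin (N - L + 1)) ℝ :=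
  Matrix.of fun i k =>
    Sum.elim (fun i' : Fin n => stateSeq A B x0 u (k : ℕ) i')
      (fun il : Fin L × Fin m => u ((k : ℕ) + (il.1 : ℕ)) il.2) i

lemma sum_mulVec' {ι n p : ℕ} {s : Finset (Fin ι)} (M : Fin ι → Matrix (Fin n) (Fin p) ℝ)
    (v : Fin p → ℝ) : (∑ i ∈ s, M i).mulVec v = ∑ i ∈ s, (M i).mulVec v := by
  induction s using Finset.cons_induction with
  | empty => simp
  | cons a s ha ih => simp [Finset.sum_insert ha, Matrix.add_mulVec, ih]

lemma sum_mulVecN {n p : ℕ} {s : Finset ℕ} (M : ℕ → Matrix (Fin n) (Fin p) ℝ)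
    (v : Fin p → ℝ) : (∑ i ∈ s, M i).mulVec v = ∑ i ∈ s, (M i).mulVec v := by
  induction s using Finset.cons_induction with
  | empty => simp
  | cons a s ha ih => simp [Finset.sum_insert ha, Matrix.add_mulVec, ih]

lemma stateSeq_add {n m : ℕ} (A : Matrix (Fin n) (Fin n) ℝ) (B : Matrix (Fin n) (Fin m) ℝ)
    (x0 : Fin n → ℝ) (u : ℕ → Fin m → ℝ) (k0 : ℕ) (j : ℕ) :
    stateSeq A B x0 u (k0 + j) =
      (A ^ j).mulVec (stateSeq A B x0 u k0) +
        ∑ q ∈ Finset.range j, ((A ^ (j - 1 - q)) * B).mulVec (u (k0 + q)) := by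
  induction j with
  | zero => simp
  | succ j ih =>
      show stateSeq A B x0 u (k0 + j + 1) = _
      rw [stateSeq, ih]
      rw [Matrix.mulVec_add, Finset.sum_range_succ]
      have h1 : A.mulVec ((A ^ j).mulVec (stateSeq A B x0 u k0)) =
          (A ^ (j+1)).mulVec (stateSeq A B x0 u k0) := by
        rw [pow_succ', Matrix.mulVec_mulVec]
      have h2 : A.mulVec (∑ q ∈ Finset.range j, ((A ^ (j - 1 - q)) * B).mulVec (u (k0 + q))) =
          ∑ q ∈ Finset.range j, ((A ^ (j + 1 - 1 - q)) * B).mulVec (u (k0 + q)) := by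
        rw [← Matrix.mulVecLin_apply, map_sum]
        simp only [Matrix.mulVecLin_apply]
        refine Finset.sum_congr rfl fun q hq => ?_
        rw [Matrix.mulVec_mulVec, ← Matrix.mul_assoc, ← pow_succ']
        have hq' := Finset.mem_range.mp hq
        have h3 : j - 1 - q + 1 = j + 1 - 1 - q := by omega
        rw [h3]
      rw [h1, h2]
      have : (A ^ (j + 1 - 1 - j) * B) = B := by simp
      rw [this]
      abel

lemma key_sum {n m : ℕ} (A : Matrix (Fin n) (Fin n) ℝ) (B : Matrix (Fin n) (Fin m) ℝ)
    (d : ℕ → ℝ) (hCayley : ∑ j ∈ Finset.range (n + 1), d j • A ^ (n - j) = 0)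
    (x0 : Fin n → ℝ) (u : ℕ → Fin m → ℝ) (k0 : ℕ) :
    ∑ j ∈ Finset.range (n + 1), d (n - j) • stateSeq A B x0 u (k0 + j) =
      ∑ q ∈ Finset.range (n + 1), ∑ p ∈ Finset.range (n - q),
        d (n - q - 1 - p) • ((A ^ p) * B).mulVec (u (k0 + q)) := by
  have hrw : ∀ j ∈ Finset.range (n + 1),
      d (n - j) • stateSeq A B x0 u (k0 + j) =
        d (n - j) • (A ^ j).mulVec (stateSeq A B x0 u k0) +
          ∑ q ∈ Finset.range j, d (n - j) • ((A ^ (j - 1 - q)) * B).mulVec (u (k0 + q)) := by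
    intro j _
    rw [stateSeq_add, smul_add, Finset.smul_sum]
  rw [Finset.sum_congr rfl hrw, Finset.sum_add_distrib]
  have h1 : ∑ j ∈ Finset.range (n + 1), d (n - j) • (A ^ j).mulVec (stateSeq A B x0 u k0) = 0 := by
    have : ∑ j ∈ Finset.range (n + 1), d (n - j) • (A ^ j) = 0 := by
      have := Finset.sum_range_reflect (fun j => d j • A ^ (n - j)) (n + 1)
      rw [hCayley] at this
      rw [← this]
      refine Finset.sum_congr rfl fun j hj => ?_
      have hj' := Finset.mem_range.mp hj
      congr 2 <;> omega
    calc ∑ j ∈ Finset.range (n + 1), d (n - j) • (A ^ j).mulVec (stateSeq A B x0 u k0)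
        = (∑ j ∈ Finset.range (n + 1), d (n - j) • (A ^ j)).mulVec (stateSeq A B x0 u k0) := by
          rw [sum_mulVecN]
          exact Finset.sum_congr rfl fun j _ => (Matrix.smul_mulVec _ _ _).symm
      _ = 0 := by rw [this]; simp
  rw [h1, zero_add]
  have h2 : ∀ j ∈ Finset.range (n + 1),
      ∑ q ∈ Finset.range j, d (n - j) • ((A ^ (j - 1 - q)) * B).mulVec (u (k0 + q)) =
        ∑ q ∈ Finset.range (n + 1),
          if q < j then d (n - j) • ((A ^ (j - 1 - q)) * B).mulVec (u (k0 + q)) else 0 := by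
    intro j hj
    have hj' := Finset.mem_range.mp hj
    rw [← Finset.sum_filter]
    congr 1
    ext q
    simp only [Finset.mem_filter, Finset.mem_range]
    omega
  rw [Finset.sum_congr rfl h2, Finset.sum_comm]
  refine Finset.sum_congr rfl fun q hq => ?_
  have hq' := Finset.mem_range.mp hq
  have h3 : ∑ j ∈ Finset.range (n + 1),
      (if q < j then d (n - j) • ((A ^ (j - 1 - q)) * B).mulVec (u (k0 + q)) else 0) =
      ∑ j ∈ Finset.Ico (q + 1) (n + 1), d (n - j) • ((A ^ (j - 1 - q)) * B).mulVec (u (k0 + q)) := by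
    rw [← Finset.sum_filter]
    congr 1
    ext j
    simp only [Finset.mem_filter, Finset.mem_range, Finset.mem_Ico]
    omega
  rw [h3, Finset.sum_Ico_eq_sum_range]
  have hnq : n + 1 - (q + 1) = n - q := by omega
  rw [hnq]
  refine Finset.sum_congr rfl fun p _ => ?_
  have e1 : n - (q + 1 + p) = n - q - 1 - p := by omega
  have e2 : q + 1 + p - 1 - q = p := by omega
  rw [e1, e2]

lemma fin_sum_sub {Nn : ℕ} (s : Finset ℕ) (hs : s ⊆ Finset.range Nn)
    (f : Fin Nn → ℝ) (g : ℕ → ℝ)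
    (h1 : ∀ (t : ℕ) (ht : t < Nn), t ∈ s → f ⟨t, ht⟩ = g t)
    (h2 : ∀ (t : ℕ) (ht : t < Nn), t ∉ s → f ⟨t, ht⟩ = 0) :
    ∑ j, f j = ∑ t ∈ s, g t := by
  have e : ∑ j : Fin Nn, f j =
      ∑ t ∈ Finset.range Nn, (fun t => if ht : t < Nn then f ⟨t, ht⟩ else 0) t := by
    rw [← Fin.sum_univ_eq_sum_range]
    exact Finset.sum_congr rfl fun j _ => by simp
  rw [e, ← Finset.sum_subset hs]
  · exact Finset.sum_congr rfl fun t ht => by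
      have ht' := Finset.mem_range.mp (hs ht)
      rw [dif_pos ht']
      exact h1 t ht' ht
  · intro t ht hnt
    have ht' := Finset.mem_range.mp ht
    rw [dif_pos ht']
    exact h2 t ht' hnt
/-- for `n ≤ k`, the stacked matrix `[Φ_k; U_k]` (columns
`(x_{k-n+j}; u_{k-n+j})` on top, blocks `u_{k-n+1+i+j}` below) satisfies
`[Φ_k; U_k] d = Z̃ u_{[k-n,k+L-1]}`. -/
theorem stmt_16 {n m : ℕ} (hn : 0 < n) (hm : 0 < m)
    (A : Matrix (Fin n) (Fin n) ℝ) (B : Matrix (Fin n) (Fin m) ℝ)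
    (d : ℕ → ℝ) (hd0 : d 0 ≠ 0)
    (hdnorm : ∑ j ∈ Finset.range (n + 1), d j ^ 2 = 1)
    (hCayley : ∑ j ∈ Finset.range (n + 1), d j • A ^ (n - j) = 0)
    (L : ℕ) (hL : 1 ≤ L)
    (u : ℕ → Fin m → ℝ) (x0 : Fin n → ℝ)
    (N : ℕ) (k : ℕ) (hk : n ≤ k) (hkN : k ≤ N - L) :
    (Matrix.of fun (i : (Fin n ⊕ Fin m) ⊕ (Fin (L - 1) × Fin m)) (j : Fin (n + 1)) =>
        match i with
        | Sum.inl (Sum.inl i') => stateSeq A B x0 u (k - n + (j : ℕ)) i'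
        | Sum.inl (Sum.inr l) => u (k - n + (j : ℕ)) l
        | Sum.inr il => u (k - n + 1 + (il.1 : ℕ) + (j : ℕ)) il.2).mulVec
      (fun j : Fin (n + 1) => d (n - (j : ℕ))) =
      (Ztil A B d L).mulVec
        (fun il : Fin (L + n) × Fin m => u (k - n + (il.1 : ℕ)) il.2) := by
  funext i
  simp only [Matrix.mulVec, dotProduct, Matrix.of_apply]
  set k0 := k - n with hk0
  rcases i with (i' | l0) | ⟨i2, l0⟩
  · rw [Fintype.sum_prod_type]
    have hsub : Finset.range (n + 1) ⊆ Finset.range (L + n) := Finset.range_subset_range.mpr (by omega)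
    have h1 : ∀ (t : ℕ) (ht : t < L + n), t ∈ Finset.range (n + 1) →
        (∑ y : Fin m, Ztil A B d L (Sum.inl (Sum.inl i')) (⟨t, ht⟩, y) * u (k0 + t) y) =
        ∑ l : Fin m,
          ((∑ s ∈ Finset.range (n - t + 1), d (n - t - s) • MarkovT A B s) (Sum.inl i') l)
            * u (k0 + t) l := by
      intro t ht hts
      have htn : t ≤ n := by have := Finset.mem_range.mp hts; omega
      refine Finset.sum_congr rfl fun l _ => ?_
      simp only [Ztil, Mtil, Matrix.of_apply]
      rw [dif_pos htn]
    have h2 : ∀ (t : ℕ) (ht : t < L + n), t ∉ Finset.range (n + 1) →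
        (∑ y : Fin m, Ztil A B d L (Sum.inl (Sum.inl i')) (⟨t, ht⟩, y) * u (k0 + t) y) = 0 := by
      intro t ht hts
      have htn : ¬ (t ≤ n) := by intro h; exact hts (Finset.mem_range.mpr (by omega))
      refine Finset.sum_eq_zero fun l _ => ?_
      simp only [Ztil, Matrix.of_apply]
      rw [dif_neg htn, zero_mul]
    have hR := fin_sum_sub (Finset.range (n + 1)) hsub
      (fun x : Fin (L + n) => ∑ y : Fin m,
        Ztil A B d L (Sum.inl (Sum.inl i')) (x, y) * u (k0 + (x : ℕ)) y)
      (fun t => ∑ l : Fin m,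
        ((∑ s ∈ Finset.range (n - t + 1), d (n - t - s) • MarkovT A B s) (Sum.inl i') l)
          * u (k0 + t) l) h1 h2
    refine Eq.trans ?_ hR.symm
    refine Eq.trans
      (Fin.sum_univ_eq_sum_range (fun t => stateSeq A B x0 u (k0 + t) i' * d (n - t)) (n + 1)) ?_
    have hL2 : ∑ j ∈ Finset.range (n + 1), stateSeq A B x0 u (k0 + j) i' * d (n - j) =
        (∑ j ∈ Finset.range (n + 1), d (n - j) • stateSeq A B x0 u (k0 + j)) i' := by
      rw [Finset.sum_apply]
      exact Finset.sum_congr rfl fun j _ => by simp [mul_comm]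
    rw [hL2, key_sum A B d hCayley x0 u k0, Finset.sum_apply]
    refine Finset.sum_congr rfl fun q hq => ?_
    rw [Finset.sum_apply]
    symm
    have hinner : ∀ l : Fin m,
        (∑ s ∈ Finset.range (n - q + 1), d (n - q - s) • MarkovT A B s) (Sum.inl i') l =
        ∑ p ∈ Finset.range (n - q), d (n - q - 1 - p) * (A ^ p * B) i' l := by
      intro l
      rw [Matrix.sum_apply, Finset.sum_range_succ']
      simp only [Matrix.smul_apply, smul_eq_mul]
      have : d (n - q - 0) * MarkovT A B 0 (Sum.inl i') l = 0 := by
        simp [MarkovT]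
      rw [this, add_zero]
      refine Finset.sum_congr rfl fun p _ => ?_
      have e1 : n - q - (p + 1) = n - q - 1 - p := by omega
      simp [MarkovT, e1]
    calc ∑ l : Fin m,
          ((∑ s ∈ Finset.range (n - q + 1), d (n - q - s) • MarkovT A B s) (Sum.inl i') l)
            * u (k0 + q) l
        = ∑ l : Fin m, ∑ p ∈ Finset.range (n - q),
            d (n - q - 1 - p) * (A ^ p * B) i' l * u (k0 + q) l := by
          refine Finset.sum_congr rfl fun l _ => ?_
          rw [hinner l, Finset.sum_mul]
      _ = ∑ p ∈ Finset.range (n - q), ∑ l : Fin m,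
            d (n - q - 1 - p) * (A ^ p * B) i' l * u (k0 + q) l := Finset.sum_comm
      _ = ∑ p ∈ Finset.range (n - q),
            (d (n - q - 1 - p) • ((A ^ p * B).mulVec (u (k0 + q)))) i' := by
          refine Finset.sum_congr rfl fun p _ => ?_
          simp [Matrix.mulVec, dotProduct, Finset.mul_sum, mul_assoc]
  · rw [Fintype.sum_prod_type]
    have hsub : Finset.range (n + 1) ⊆ Finset.range (L + n) := Finset.range_subset_range.mpr (by omega)
    have hM : ∀ (t : ℕ) (ht : t ≤ n) (y : Fin m),
        (∑ s ∈ Finset.range (n - t + 1), d (n - t - s) • MarkovT A B s) (Sum.inr l0) y =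
        d (n - t) * (if l0 = y then 1 else 0) := by
      intro t ht y
      rw [Matrix.sum_apply]
      rw [Finset.sum_eq_single_of_mem 0 (Finset.mem_range.mpr (by omega))]
      · simp [MarkovT]
      · intro s _ hs
        match s, hs with
        | s + 1, _ => simp [MarkovT]
    have h1 : ∀ (t : ℕ) (ht : t < L + n), t ∈ Finset.range (n + 1) →
        (∑ y : Fin m, Ztil A B d L (Sum.inl (Sum.inr l0)) (⟨t, ht⟩, y) * u (k0 + t) y) =
        d (n - t) * u (k0 + t) l0 := by
      intro t ht hts
      have htn : t ≤ n := by have := Finset.mem_range.mp hts; omega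
      have e : ∀ y : Fin m,
          Ztil A B d L (Sum.inl (Sum.inr l0)) (⟨t, ht⟩, y) =
          d (n - t) * (if l0 = y then 1 else 0) := by
        intro y
        simp only [Ztil, Mtil, Matrix.of_apply]
        rw [dif_pos htn]
        exact hM t htn y
      rw [Finset.sum_congr rfl fun y _ => by rw [e y]]
      simp
    have h2 : ∀ (t : ℕ) (ht : t < L + n), t ∉ Finset.range (n + 1) →
        (∑ y : Fin m, Ztil A B d L (Sum.inl (Sum.inr l0)) (⟨t, ht⟩, y) * u (k0 + t) y) = 0 := by
      intro t ht hts
      have htn : ¬ (t ≤ n) := by intro h; exact hts (Finset.mem_range.mpr (by omega))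
      refine Finset.sum_eq_zero fun y _ => ?_
      simp only [Ztil, Matrix.of_apply]
      rw [dif_neg htn, zero_mul]
    have hR := fin_sum_sub (Finset.range (n + 1)) hsub
      (fun x : Fin (L + n) => ∑ y : Fin m,
        Ztil A B d L (Sum.inl (Sum.inr l0)) (x, y) * u (k0 + (x : ℕ)) y)
      (fun t => d (n - t) * u (k0 + t) l0) h1 h2
    refine Eq.trans ?_ hR.symm
    refine Eq.trans
      (Fin.sum_univ_eq_sum_range (fun t => u (k0 + t) l0 * d (n - t)) (n + 1)) ?_
    exact Finset.sum_congr rfl fun t _ => mul_comm _ _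
  · rw [Fintype.sum_prod_type]
    have hi2 : (i2 : ℕ) < L - 1 := i2.isLt
    have hsub : Finset.Ico ((i2 : ℕ) + 1) ((i2 : ℕ) + n + 2) ⊆ Finset.range (L + n) := by
      intro t ht
      have := Finset.mem_Ico.mp ht
      exact Finset.mem_range.mpr (by omega)
    have h1 : ∀ (t : ℕ) (ht : t < L + n), t ∈ Finset.Ico ((i2 : ℕ) + 1) ((i2 : ℕ) + n + 2) →
        (∑ y : Fin m, Ztil A B d L (Sum.inr (i2, l0)) (⟨t, ht⟩, y) * u (k0 + t) y) =
        d (n - (t - 1 - (i2 : ℕ))) * u (k0 + t) l0 := by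
      intro t ht hts
      have htc := Finset.mem_Ico.mp hts
      have e : ∀ y : Fin m,
          Ztil A B d L (Sum.inr (i2, l0)) (⟨t, ht⟩, y) =
          d (n - (t - 1 - (i2 : ℕ))) * (if l0 = y then 1 else 0) := by
        intro y
        simp only [Ztil, Tmat, Matrix.of_apply]
        rw [dif_pos (by omega : 1 ≤ t)]
        rw [if_pos ⟨by omega, by omega⟩]
      rw [Finset.sum_congr rfl fun y _ => by rw [e y]]
      simp
    have h2 : ∀ (t : ℕ) (ht : t < L + n), t ∉ Finset.Ico ((i2 : ℕ) + 1) ((i2 : ℕ) + n + 2) →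
        (∑ y : Fin m, Ztil A B d L (Sum.inr (i2, l0)) (⟨t, ht⟩, y) * u (k0 + t) y) = 0 := by
      intro t ht hts
      rw [Finset.mem_Ico] at hts
      push_neg at hts
      refine Finset.sum_eq_zero fun y _ => ?_
      simp only [Ztil, Tmat, Matrix.of_apply]
      by_cases h1t : 1 ≤ t
      · rw [dif_pos h1t, if_neg (by omega), zero_mul, zero_mul]
      · rw [dif_neg h1t, zero_mul]
    have hR := fin_sum_sub (Finset.Ico ((i2 : ℕ) + 1) ((i2 : ℕ) + n + 2)) hsub
      (fun x : Fin (L + n) => ∑ y : Fin m,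
        Ztil A B d L (Sum.inr (i2, l0)) (x, y) * u (k0 + (x : ℕ)) y)
      (fun t => d (n - (t - 1 - (i2 : ℕ))) * u (k0 + t) l0) h1 h2
    refine Eq.trans ?_ hR.symm
    rw [Finset.sum_Ico_eq_sum_range]
    have hcard : (i2 : ℕ) + n + 2 - ((i2 : ℕ) + 1) = n + 1 := by omega
    rw [hcard]
    refine Eq.trans
      (Fin.sum_univ_eq_sum_range (fun t => u (k0 + 1 + (i2 : ℕ) + t) l0 * d (n - t)) (n + 1)) ?_
    refine Finset.sum_congr rfl fun j hj => ?_
    have e1 : (i2 : ℕ) + 1 + j - 1 - (i2 : ℕ) = j := by omega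
    have e2 : k0 + ((i2 : ℕ) + 1 + j) = k0 + 1 + (i2 : ℕ) + j := by omega
    rw [e1, e2, mul_comm]
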